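/- Let ρ > 0, μ ≥ 0, y₀ > 0, and let λ < 0 satisfy λ ≤ −μy₀. Suppose y : [0, ∞) → [0, ∞) is differentiable with y(0) = y₀ and y'(t) ≤ λρ·y(t) + μρ·y(t)² for all t ≥ 0. Then y(t)·[e^{−λρt}/y₀ + (μ/λ)(e^{−λρt} − 1)] ≤ 1 for all t ≥ 0; in particular y(t) ≤ |λ|y₀/((|λ| − μy₀)e^{|λ|ρt} + μy₀) for all t ≥ 0, and if moreover λ < −μy₀ then y(t) → 0 as t → +∞. -/

import Mathlib

open Real Filter

/-- Comparison result for the scalar differential inequality `y' ≤ λρy + μρy²` on `[0, ∞)`: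
`y(t)·[e^{−λρt}/y₀ + (μ/λ)(e^{−λρt} − 1)] ≤ 1`, hence
`y(t) ≤ |λ|y₀/((|λ| − μy₀)e^{|λ|ρt} + μy₀)`, and if `λ < −μy₀` then `y(t) → 0`. -/
theorem stmt_4 (ρ μ y₀ lam : ℝ) (hρ : 0 < ρ) (hμ : 0 ≤ μ) (hy₀ : 0 < y₀)
    (hlam : lam < 0) (hlam' : lam ≤ -μ * y₀)
    (y d : ℝ → ℝ)
    (hy0 : y 0 = y₀)
    (hynn : ∀ t, 0 ≤ t → 0 ≤ y t)
    (hderiv : ∀ t, 0 ≤ t → HasDerivAt y (d t) t)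
    (hineq : ∀ t, 0 ≤ t → d t ≤ lam * ρ * y t + μ * ρ * (y t) ^ 2) :
    (∀ t, 0 ≤ t →
        y t * (Real.exp (-lam * ρ * t) / y₀ + (μ / lam) * (Real.exp (-lam * ρ * t) - 1)) ≤ 1)
    ∧ (∀ t, 0 ≤ t →
        y t ≤ |lam| * y₀ / ((|lam| - μ * y₀) * Real.exp (|lam| * ρ * t) + μ * y₀))
    ∧ (lam < -μ * y₀ → Tendsto y atTop (nhds 0)) := by
  have hlamne : lam ≠ 0 := ne_of_lt hlam
  have hy₀ne : y₀ ≠ 0 := ne_of_gt hy₀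
  set c : ℝ := μ * ρ with hc
  have hcnn : 0 ≤ c := mul_nonneg hμ hρ.le
  -- continuity of y on [0,∞)
  have hycont : ContinuousOn y (Set.Ici 0) := fun t ht =>
    ((hderiv t ht).continuousAt).continuousWithinAt
  -- continuous extension of y
  set yt : ℝ → ℝ := fun t => y (max t 0) with hytdef
  have hmax : Continuous (fun t : ℝ => max t 0) := continuous_id.max continuous_const
  have hytc : Continuous yt :=
    hycont.comp_continuous hmax (fun x => Set.mem_Ici.mpr (le_max_right _ _))
  have hyteq : ∀ t, 0 ≤ t → yt t = y t := by
    intro t ht; simp [hytdef, max_eq_left ht]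
  set Y : ℝ → ℝ := fun t => ∫ s in (0:ℝ)..t, yt s with hYdef
  have hYd : ∀ t : ℝ, HasDerivAt Y (yt t) t := by
    intro t
    exact intervalIntegral.integral_hasDerivAt_right
      (hytc.intervalIntegrable 0 t)
      (hytc.stronglyMeasurable.stronglyMeasurableAtFilter)
      hytc.continuousAt
  -- φ and its derivative
  set φ : ℝ → ℝ := fun t =>
    Real.exp (-lam * ρ * t) / y₀ + (μ / lam) * (Real.exp (-lam * ρ * t) - 1) with hφdef
  have hE : ∀ t : ℝ, HasDerivAt (fun s => Real.exp (-lam * ρ * s))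
      (-lam * ρ * Real.exp (-lam * ρ * t)) t := by
    intro t
    have h1 : HasDerivAt (fun s : ℝ => -lam * ρ * s) (-lam * ρ) t := by
      simpa using (hasDerivAt_id t).const_mul (-lam * ρ)
    simpa [mul_comm] using h1.exp
  have hφd : ∀ t : ℝ, HasDerivAt φ (-lam * ρ * φ t - c) t := by
    intro t
    have h1 : HasDerivAt φ
        ((-lam * ρ * Real.exp (-lam * ρ * t)) / y₀ +
          (μ / lam) * (-lam * ρ * Real.exp (-lam * ρ * t))) t := by
      exact ((hE t).div_const y₀).add ((((hE t).sub_const 1)).const_mul (μ / lam))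
    convert h1 using 1
    simp only [hφdef, hc]
    field_simp
    ring
  -- φ is positive on [0,∞)
  have hφpos : ∀ t : ℝ, 0 ≤ t → 0 < φ t := by
    intro t ht
    have hexp : 1 ≤ Real.exp (-lam * ρ * t) := by
      apply Real.one_le_exp
      nlinarith [mul_nonneg (mul_nonneg (by linarith : (0:ℝ) ≤ -lam) hρ.le) ht]
    have ha : 0 ≤ 1 / y₀ + μ / lam := by
      rw [div_add_div _ _ hy₀ne hlamne]
      rw [div_nonneg_iff]
      right
      constructor <;> nlinarith
    have hb : 0 ≤ -(μ / lam) := by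
      rw [neg_nonneg]
      exact div_nonpos_of_nonneg_of_nonpos hμ hlam.le
    have : φ t = Real.exp (-lam * ρ * t) * (1 / y₀ + μ / lam) + -(μ / lam) := by
      simp only [hφdef]; ring
    rw [this]
    have h1 : 1 * (1 / y₀ + μ / lam) ≤ Real.exp (-lam * ρ * t) * (1 / y₀ + μ / lam) :=
      mul_le_mul_of_nonneg_right hexp ha
    have h2 : 1 / y₀ + μ / lam + -(μ / lam) = 1 / y₀ := by ring
    have h3 : 0 < 1 / y₀ := one_div_pos.mpr hy₀
    linarith
  -- the auxiliary function u
  set u : ℝ → ℝ := fun t => (y t * φ t - 1) * Real.exp (-(c * Y t)) with hudef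
  have hud : ∀ t : ℝ, 0 ≤ t → HasDerivAt u
      ((d t * φ t + y t * (-lam * ρ * φ t - c)) * Real.exp (-(c * Y t)) +
        (y t * φ t - 1) * (Real.exp (-(c * Y t)) * (-(c * y t)))) t := by
    intro t ht
    have hw : HasDerivAt (fun s => y s * φ s)
        (d t * φ t + y t * (-lam * ρ * φ t - c)) t := (hderiv t ht).mul (hφd t)
    have hexp' : HasDerivAt (fun s => Real.exp (-(c * Y s)))
        (Real.exp (-(c * Y t)) * (-(c * y t))) t := by
      have h1 : HasDerivAt (fun s => -(c * Y s)) (-(c * yt t)) t := ((hYd t).const_mul c).neg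
      have := h1.exp
      rw [hyteq t ht] at this
      simpa [mul_comm] using this
    exact ((hw.sub_const 1).mul hexp')
  have hudnonpos : ∀ t : ℝ, 0 ≤ t →
      (d t * φ t + y t * (-lam * ρ * φ t - c)) * Real.exp (-(c * Y t)) +
        (y t * φ t - 1) * (Real.exp (-(c * Y t)) * (-(c * y t))) ≤ 0 := by
    intro t ht
    have hφt := (hφpos t ht).le
    have hyt := hynn t ht
    have hexp : (0:ℝ) < Real.exp (-(c * Y t)) := Real.exp_pos _
    have hd := hineq t ht
    have key : d t * φ t + y t * (-lam * ρ * φ t - c) - c * y t * (y t * φ t - 1) ≤ 0 := by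
      have h1 : d t * φ t ≤ (lam * ρ * y t + μ * ρ * (y t) ^ 2) * φ t :=
        mul_le_mul_of_nonneg_right hd hφt
      nlinarith
    nlinarith
  -- u is antitone on [0,∞)
  have hanti : AntitoneOn u (Set.Ici 0) := by
    apply antitoneOn_of_deriv_nonpos (convex_Ici 0)
    · intro t ht
      exact ((hud t ht).continuousAt).continuousWithinAt
    · intro t ht
      rw [interior_Ici] at ht
      exact ((hud t (le_of_lt ht)).differentiableAt).differentiableWithinAt
    · intro t ht
      rw [interior_Ici] at ht
      rw [(hud t (le_of_lt ht)).deriv]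
      exact hudnonpos t (le_of_lt ht)
  have hu0 : u 0 = 0 := by
    simp only [hudef, hYdef]
    rw [intervalIntegral.integral_same, hy0]
    simp only [hφdef]
    simp [hy₀ne]
  -- Part 1
  have part1 : ∀ t, 0 ≤ t → y t * φ t ≤ 1 := by
    intro t ht
    have h1 : u t ≤ u 0 := hanti (Set.self_mem_Ici) ht ht
    rw [hu0] at h1
    have hexp : (0:ℝ) < Real.exp (-(c * Y t)) := Real.exp_pos _
    simp only [hudef] at h1
    nlinarith
  -- Part 2
  have habs : |lam| = -lam := abs_of_neg hlam
  have part2 : ∀ t, 0 ≤ t →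
      y t ≤ |lam| * y₀ / ((|lam| - μ * y₀) * Real.exp (|lam| * ρ * t) + μ * y₀) := by
    intro t ht
    rw [habs]
    set D : ℝ := (-lam - μ * y₀) * Real.exp (-lam * ρ * t) + μ * y₀ with hD
    have hexp1 : 1 ≤ Real.exp (-lam * ρ * t) := Real.one_le_exp (by nlinarith [mul_nonneg (mul_nonneg (by linarith : (0:ℝ) ≤ -lam) hρ.le) ht])
    have hDpos : 0 < D := by
      have h1 : (0:ℝ) ≤ -lam - μ * y₀ := by nlinarith
      nlinarith
    have hφeq : φ t = D / (-lam * y₀) := by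
      simp only [hφdef, hD]
      field_simp
      ring
    have h1 := part1 t ht
    rw [hφeq] at h1
    have hden : 0 < -lam * y₀ := by nlinarith
    rw [le_div_iff₀ hDpos]
    have h2 : y t * (D / (-lam * y₀)) * (-lam * y₀) ≤ 1 * (-lam * y₀) :=
      mul_le_mul_of_nonneg_right h1 hden.le
    have h3 : y t * (D / (-lam * y₀)) * (-lam * y₀) = y t * D := by
      field_simp
    nlinarith
  refine ⟨part1, part2, ?_⟩
  -- Part 3
  intro hs
  have hcoef : 0 < -lam - μ * y₀ := by linarith
  have hDto : Tendsto (fun t => (|lam| - μ * y₀) * Real.exp (|lam| * ρ * t) + μ * y₀)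
      atTop atTop := by
    rw [habs]
    apply Tendsto.atTop_add _ tendsto_const_nhds
    apply Tendsto.const_mul_atTop hcoef
    apply Real.tendsto_exp_atTop.comp
    exact Tendsto.const_mul_atTop (by nlinarith : (0:ℝ) < -lam * ρ) tendsto_id
  have hbound : Tendsto (fun t => |lam| * y₀ /
      ((|lam| - μ * y₀) * Real.exp (|lam| * ρ * t) + μ * y₀)) atTop (nhds 0) :=
    Tendsto.div_atTop tendsto_const_nhds hDto
  apply squeeze_zero' _ _ hbound
  · filter_upwards [eventually_ge_atTop (0:ℝ)] with t ht using hynn t ht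
  · filter_upwards [eventually_ge_atTop (0:ℝ)] with t ht using part2 t ht
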